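/- Let G and H be finite groups and k a field whose characteristic does not divide |G| − |H|. Then the universal comeasuring algebra A_{k[G],k[H]} between the Frobenius group algebras k[H] and k[G] is the zero algebra. Concretely: in any unital k-algebra Q equipped with a comeasuring of Frobenius algebras ρ : k[H] → k[G] ⊗ Q, one has |G|·1_Q = |H|·1_Q, hence 1_Q = 0 when char k ∤ (|G|−|H|), so Q = 0. -/

import Mathlib

open TensorProduct

/-- A comeasuring of Frobenius algebras from `(A, Δ_A, ν_A)` to `(B, Δ_B, ν_B)` with
coefficient algebra `Q`: a linear map `ρ : A → B ⊗ Q`, `ρ(a) = a⁽⁰⁾ ⊗ a⁽¹⁾`, which is an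
algebra map and satisfies
`a^{(1)[0]} ⊗ a^{(2)[0]} ⊗ a^{(1)[1]}a^{(2)[1]} = a^{[0](1)} ⊗ a^{[0](2)} ⊗ a^{[1]}`
and `ν_B(a⁽⁰⁾)a⁽¹⁾ = ν_A(a)1_Q`. -/
def IsFrobComeasuring {k A B Q : Type*} [CommRing k] [Ring A] [Algebra k A]
    [Ring B] [Algebra k B] [Ring Q] [Algebra k Q]
    (ΔA : A →ₗ[k] A ⊗[k] A) (νA : A →ₗ[k] k)
    (ΔB : B →ₗ[k] B ⊗[k] B) (νB : B →ₗ[k] k)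
    (ρ : A →ₗ[k] B ⊗[k] Q) : Prop :=
  (∀ a a' : A, ρ (a * a') = ρ a * ρ a') ∧
  (ρ 1 = 1) ∧
  (∀ a : A,
    TensorProduct.map (LinearMap.id : B ⊗[k] B →ₗ[k] B ⊗[k] B) (LinearMap.mul' k Q)
        (TensorProduct.tensorTensorTensorComm k B Q B Q
          (TensorProduct.map ρ ρ (ΔA a)))
      = TensorProduct.map ΔB (LinearMap.id : Q →ₗ[k] Q) (ρ a)) ∧
  (∀ a : A,
    TensorProduct.lid k Q
        (TensorProduct.map νB (LinearMap.id : Q →ₗ[k] Q) (ρ a)) = νA a • (1 : Q))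

section GroupFrobenius

variable (k : Type*) [Field k] (G : Type*) [Group G] [Fintype G] [DecidableEq G]

/-- The Frobenius comultiplication `Δ(g) = Σ_{h ∈ G} gh⁻¹ ⊗ h` on a finite group
algebra. -/
noncomputable def groupComul :
    MonoidAlgebra k G →ₗ[k] MonoidAlgebra k G ⊗[k] MonoidAlgebra k G :=
  (Finsupp.lsum k fun g =>
    LinearMap.toSpanSingleton k (MonoidAlgebra k G ⊗[k] MonoidAlgebra k G)
      (∑ h : G, MonoidAlgebra.single (g * h⁻¹) (1 : k) ⊗ₜ[k] MonoidAlgebra.single h (1 : k)))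
    ∘ₗ (MonoidAlgebra.coeffLinearEquiv k).toLinearMap

/-- The Frobenius counit `ν(g) = δ_{g,1}` on a finite group algebra. -/
noncomputable def groupCounit : MonoidAlgebra k G →ₗ[k] k :=
  Finsupp.lapply (1 : G) ∘ₗ (MonoidAlgebra.coeffLinearEquiv k).toLinearMap

end GroupFrobenius

set_option synthInstance.maxHeartbeats 800000 in
lemma frob_aux {k : Type*} [CommRing k] {B Q : Type*} [Ring B] [Algebra k B]
    [Ring Q] [Algebra k Q] (ν : B →ₗ[k] k) (x y : B ⊗[k] Q) :
    TensorProduct.lid k Q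
      (TensorProduct.map (ν ∘ₗ LinearMap.mul' k B) (LinearMap.id : Q →ₗ[k] Q)
        (TensorProduct.map (LinearMap.id : B ⊗[k] B →ₗ[k] B ⊗[k] B) (LinearMap.mul' k Q)
          (TensorProduct.tensorTensorTensorComm k B Q B Q (x ⊗ₜ[k] y))))
      = TensorProduct.lid k Q
          (TensorProduct.map ν (LinearMap.id : Q →ₗ[k] Q) (x * y)) := by
  induction x using TensorProduct.induction_on with
  | zero =>
    rw [TensorProduct.zero_tmul, map_zero, map_zero, map_zero, zero_mul, map_zero, map_zero]
    simp
  | tmul b q =>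
    induction y using TensorProduct.induction_on with
    | zero =>
      rw [TensorProduct.tmul_zero, map_zero, map_zero, map_zero, mul_zero, map_zero, map_zero]
      simp
    | tmul b' q' =>
      rw [Algebra.TensorProduct.tmul_mul_tmul, TensorProduct.tensorTensorTensorComm_tmul,
        TensorProduct.map_tmul, TensorProduct.map_tmul, TensorProduct.map_tmul]
      simp
    | add y1 y2 h1 h2 =>
      rw [TensorProduct.tmul_add, map_add, map_add, map_add, mul_add, map_add, h1, h2]
      rw [map_add, map_add]
  | add x1 x2 h1 h2 =>
    rw [TensorProduct.add_tmul, map_add, map_add, map_add, add_mul, map_add, h1, h2]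
    rw [map_add, map_add]


/-- If `G` and `H` are finite groups and `char k` does not divide `|G| − |H|`, then any
unital `k`-algebra `Q` carrying a comeasuring of Frobenius algebras
`ρ : k[H] → k[G] ⊗ Q` satisfies `|G|·1_Q = |H|·1_Q` and `1_Q = 0`, i.e. `Q = 0`; in
particular the universal comeasuring algebra between these group Frobenius algebras is
zero. -/
theorem group_comeasuring_trivial {k : Type*} [Field k]
    {G : Type*} [Group G] [Fintype G] [DecidableEq G]
    {H : Type*} [Group H] [Fintype H] [DecidableEq H]
    (hchar : ¬ ((ringChar k : ℤ) ∣ (Fintype.card G : ℤ) - (Fintype.card H : ℤ)))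
    (Q : Type*) [Ring Q] [Algebra k Q]
    (ρ : MonoidAlgebra k H →ₗ[k] MonoidAlgebra k G ⊗[k] Q)
    (hρ : IsFrobComeasuring (groupComul k H) (groupCounit k H)
      (groupComul k G) (groupCounit k G) ρ) :
    (Fintype.card G : Q) = (Fintype.card H : Q) ∧ Subsingleton Q := by
  classical
  obtain ⟨hmul, hone, hcomul, hcounit⟩ := hρ
  -- basic computations in the group Frobenius algebras
  have hΔH : groupComul k H (1 : MonoidAlgebra k H)
      = ∑ h : H, MonoidAlgebra.single (h⁻¹ : H) (1 : k) ⊗ₜ[k]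
          MonoidAlgebra.single h (1 : k) := by
    rw [MonoidAlgebra.one_def]; unfold groupComul
    rw [LinearMap.comp_apply]
    erw [show (MonoidAlgebra.coeffLinearEquiv k) (MonoidAlgebra.single (1 : H) (1 : k))
      = Finsupp.single 1 1 from rfl]
    erw [Finsupp.lsum_single (S := k)]
    simp [LinearMap.toSpanSingleton_apply]
  have hΔG : groupComul k G (1 : MonoidAlgebra k G)
      = ∑ g : G, MonoidAlgebra.single (g⁻¹ : G) (1 : k) ⊗ₜ[k]
          MonoidAlgebra.single g (1 : k) := by
    rw [MonoidAlgebra.one_def]; unfold groupComul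
    rw [LinearMap.comp_apply]
    erw [show (MonoidAlgebra.coeffLinearEquiv k) (MonoidAlgebra.single (1 : G) (1 : k))
      = Finsupp.single 1 1 from rfl]
    erw [Finsupp.lsum_single (S := k)]
    simp [LinearMap.toSpanSingleton_apply]
  have hνG1 : groupCounit k G (1 : MonoidAlgebra k G) = 1 := by
    rw [MonoidAlgebra.one_def]; unfold groupCounit
    rw [LinearMap.comp_apply]
    erw [show (MonoidAlgebra.coeffLinearEquiv k) (MonoidAlgebra.single (1 : G) (1 : k))
      = Finsupp.single 1 1 from rfl]
    erw [Finsupp.lapply_apply, Finsupp.single_eq_same]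
  have hνH1 : groupCounit k H (1 : MonoidAlgebra k H) = 1 := by
    rw [MonoidAlgebra.one_def]; unfold groupCounit
    rw [LinearMap.comp_apply]
    erw [show (MonoidAlgebra.coeffLinearEquiv k) (MonoidAlgebra.single (1 : H) (1 : k))
      = Finsupp.single 1 1 from rfl]
    erw [Finsupp.lapply_apply, Finsupp.single_eq_same]
  have hinv : ∀ h : H, MonoidAlgebra.single (h⁻¹ : H) (1 : k)
      * MonoidAlgebra.single h (1 : k) = 1 := fun h => by
    rw [MonoidAlgebra.single_mul_single, inv_mul_cancel, one_mul, ← MonoidAlgebra.one_def]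
  have hinvG : ∀ g : G, MonoidAlgebra.single (g⁻¹ : G) (1 : k)
      * MonoidAlgebra.single g (1 : k) = 1 := fun g => by
    rw [MonoidAlgebra.single_mul_single, inv_mul_cancel, one_mul, ← MonoidAlgebra.one_def]
  -- the map `ν_B ∘ μ_B ⊗ id` followed by `lid`
  let F : (MonoidAlgebra k G ⊗[k] MonoidAlgebra k G) ⊗[k] Q →ₗ[k] Q :=
    (TensorProduct.lid k Q).toLinearMap ∘ₗ
      TensorProduct.map (groupCounit k G ∘ₗ LinearMap.mul' k (MonoidAlgebra k G)) LinearMap.id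
  -- the composite map applied to the LHS of the comultiplication compatibility
  let Φ : (MonoidAlgebra k G ⊗[k] Q) ⊗[k] (MonoidAlgebra k G ⊗[k] Q) →ₗ[k] Q :=
    F ∘ₗ TensorProduct.map LinearMap.id (LinearMap.mul' k Q) ∘ₗ
      (TensorProduct.tensorTensorTensorComm k (MonoidAlgebra k G) Q
        (MonoidAlgebra k G) Q).toLinearMap
  have hΦ : ∀ x y : MonoidAlgebra k G ⊗[k] Q, Φ (x ⊗ₜ[k] y) =
      TensorProduct.lid k Q (TensorProduct.map (groupCounit k G) LinearMap.id (x * y)) :=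
    fun x y => frob_aux (groupCounit k G) x y
  have hmain := congrArg F (hcomul 1)
  have hLx : F (TensorProduct.map LinearMap.id (LinearMap.mul' k Q)
        (TensorProduct.tensorTensorTensorComm k (MonoidAlgebra k G) Q (MonoidAlgebra k G) Q
          (TensorProduct.map ρ ρ (groupComul k H 1))))
      = Φ (TensorProduct.map ρ ρ (groupComul k H 1)) := rfl
  rw [hLx] at hmain
  -- left-hand side equals `|H| • 1`
  have hL : Φ (TensorProduct.map ρ ρ (groupComul k H 1)) = (Fintype.card H : Q) := by
    rw [hΔH, map_sum, map_sum]
    have : ∀ h : H,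
        Φ (TensorProduct.map ρ ρ
          (MonoidAlgebra.single (h⁻¹ : H) (1 : k) ⊗ₜ[k] MonoidAlgebra.single h (1 : k)))
          = 1 := by
      intro h
      rw [TensorProduct.map_tmul, hΦ, ← hmul, hinv h]
      have := hcounit 1
      rw [hνH1, one_smul] at this
      exact this
    rw [Finset.sum_congr rfl fun h _ => this h]
    simp
  -- right-hand side equals `|G| • 1`
  have hR : F (TensorProduct.map (groupComul k G) LinearMap.id (ρ 1))
      = (Fintype.card G : Q) := by
    rw [hone, Algebra.TensorProduct.one_def, TensorProduct.map_tmul, LinearMap.id_apply, hΔG,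
      TensorProduct.sum_tmul, map_sum]
    have : ∀ g : G,
        F ((MonoidAlgebra.single (g⁻¹ : G) (1 : k) ⊗ₜ[k] MonoidAlgebra.single g (1 : k)) ⊗ₜ[k]
            (1 : Q)) = 1 := by
      intro g
      show (TensorProduct.lid k Q)
        (TensorProduct.map (groupCounit k G ∘ₗ LinearMap.mul' k (MonoidAlgebra k G))
          LinearMap.id
          ((MonoidAlgebra.single (g⁻¹ : G) (1 : k) ⊗ₜ[k] MonoidAlgebra.single g (1 : k)) ⊗ₜ[k]
            (1 : Q))) = 1
      rw [TensorProduct.map_tmul, LinearMap.id_apply, LinearMap.comp_apply,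
        LinearMap.mul'_apply, hinvG g, hνG1, TensorProduct.lid_tmul, one_smul]
    rw [Finset.sum_congr rfl fun g _ => this g]
    simp
  rw [hL, hR] at hmain
  refine ⟨hmain.symm, ?_⟩
  have hk : ((Fintype.card G : k) - (Fintype.card H : k)) ≠ 0 := by
    intro h0
    apply hchar
    rw [← CharP.intCast_eq_zero_iff k (ringChar k)]
    push_cast
    exact h0
  have hz : algebraMap k Q ((Fintype.card G : k) - (Fintype.card H : k)) = 0 := by
    rw [map_sub, map_natCast, map_natCast, hmain, sub_self]
  have h10 : (1 : Q) = 0 := by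
    calc (1 : Q) = algebraMap k Q (((Fintype.card G : k) - (Fintype.card H : k))⁻¹ *
        ((Fintype.card G : k) - (Fintype.card H : k))) := by
          rw [inv_mul_cancel₀ hk, map_one]
      _ = algebraMap k Q (((Fintype.card G : k) - (Fintype.card H : k))⁻¹) *
            algebraMap k Q ((Fintype.card G : k) - (Fintype.card H : k)) := by rw [map_mul]
      _ = 0 := by rw [hz, mul_zero]
  exact subsingleton_of_zero_eq_one h10.symm
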